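/- Let p ∈ ℝ[t], let x ∈ ℝⁿ with x > 0 entrywise, and suppose n ≥ 2. For every r ∈ {0,…,n−1}, the r mod n-part of p evaluated at K_x satisfies p_{(r,n)}(K_x) = [ p_{(r,n)}(α_x^{1/n}) / α_x^{r/n} ] · K_x^r. -/

import Mathlib

open Matrix
open scoped Fin.NatCast Fin.CommRing

/-- The `n`-by-`n` cyclic permutation matrix `C` with `(i,j)`-entry `δ_{π(i),j}`,
where `π(i) = (i mod n) + 1` (realized 0-based by `finRotate n : i ↦ i + 1`). -/
noncomputable def cycMat (n : ℕ) : Matrix (Fin n) (Fin n) ℝ :=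
  (finRotate n).permMatrix ℝ

/-- `K_x := D_x C`. -/
noncomputable def Kmat {n : ℕ} (x : Fin n → ℝ) : Matrix (Fin n) (Fin n) ℝ :=
  Matrix.diagonal x * cycMat n

/-- The `r mod n`-part of `p`: `p_{(r,n)}(t) := Σ_{k ≤ deg p, k mod n = r} a_k t^k`. -/
noncomputable def polyPart (p : Polynomial ℝ) (n r : ℕ) : Polynomial ℝ :=
  ∑ k ∈ Finset.range (p.natDegree + 1),
    if k % n = r then Polynomial.C (p.coeff k) * Polynomial.X ^ k else 0

lemma perm_mul_diagonal {n : ℕ} (τ : Equiv.Perm (Fin n)) (x : Fin n → ℝ) :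
    τ.permMatrix ℝ * Matrix.diagonal x = Matrix.diagonal (x ∘ τ) * τ.permMatrix ℝ := by
  ext i j
  simp only [Equiv.Perm.permMatrix, Matrix.mul_diagonal, Matrix.diagonal_mul,
    PEquiv.toMatrix_apply, Equiv.toPEquiv_apply, Option.mem_def, Option.some.injEq,
    Function.comp_apply]
  by_cases h : τ i = j <;> simp [h]

lemma permMatrix_one {n : ℕ} : ((1 : Equiv.Perm (Fin n)).permMatrix ℝ) = 1 := by
  rw [Equiv.Perm.permMatrix, show (1 : Equiv.Perm (Fin n)) = Equiv.refl _ from rfl,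
    Equiv.toPEquiv_refl, PEquiv.toMatrix_refl]

lemma permMatrix_mul {n : ℕ} (σ τ : Equiv.Perm (Fin n)) :
    σ.permMatrix ℝ * τ.permMatrix ℝ = (τ * σ).permMatrix ℝ := by
  simp [Equiv.Perm.permMatrix, ← PEquiv.toMatrix_trans, ← Equiv.toPEquiv_trans]

lemma permMatrix_pow {n : ℕ} (σ : Equiv.Perm (Fin n)) (m : ℕ) :
    (σ.permMatrix ℝ) ^ m = (σ ^ m).permMatrix ℝ := by
  induction m with
  | zero => simp [permMatrix_one]
  | succ m ih =>
      rw [pow_succ, ih, permMatrix_mul, ← pow_succ']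

lemma finRotate_pow_apply {n : ℕ} (m : ℕ) (i : Fin (n + 1)) :
    ((finRotate (n + 1)) ^ m) i = i + (m : Fin (n + 1)) := by
  induction m with
  | zero => simp
  | succ m ih =>
      rw [pow_succ', Equiv.Perm.mul_apply, ih, finRotate_succ_apply]
      push_cast
      ring

lemma Kmat_pow {n : ℕ} (x : Fin (n + 1) → ℝ) (m : ℕ) :
    Kmat x ^ m =
      Matrix.diagonal (fun i => ∏ j ∈ Finset.range m, x (i + (j : Fin (n + 1)))) *
        ((finRotate (n + 1)).permMatrix ℝ) ^ m := by
  induction m with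
  | zero => simp
  | succ m ih =>
      rw [pow_succ, ih, Kmat, cycMat]
      rw [permMatrix_pow]
      rw [Matrix.mul_assoc, ← Matrix.mul_assoc _ (Matrix.diagonal x) _,
        perm_mul_diagonal, Matrix.mul_assoc, ← permMatrix_pow, ← pow_succ,
        ← Matrix.mul_assoc, Matrix.diagonal_mul_diagonal]
      have : (fun i => (∏ j ∈ Finset.range m, x (i + (j : Fin (n+1)))) *
          (x ∘ ⇑(finRotate (n + 1) ^ m)) i)
          = fun i => ∏ j ∈ Finset.range (m+1), x (i + (j : Fin (n+1))) := by
        funext i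
        rw [Finset.prod_range_succ]
        congr 1
        simp [finRotate_pow_apply]
      rw [this]

lemma Kmat_pow_n {n : ℕ} (hn : 2 ≤ n) (x : Fin n → ℝ) :
    Kmat x ^ n = (∏ k, x k) • (1 : Matrix (Fin n) (Fin n) ℝ) := by
  obtain ⟨m, rfl⟩ : ∃ m, n = m + 1 := ⟨n - 1, by omega⟩
  rw [Kmat_pow, permMatrix_pow]
  have hσ : (finRotate (m + 1)) ^ (m + 1) = 1 := by
    ext i
    simp [finRotate_pow_apply]
  rw [hσ]
  rw [_root_.permMatrix_one, Matrix.mul_one]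
  have hdiag : (fun i : Fin (m+1) => ∏ j ∈ Finset.range (m + 1), x (i + (j : Fin (m+1))))
      = fun _ => ∏ k, x k := by
    funext i
    rw [← Fin.prod_univ_eq_prod_range (fun j => x (i + (j : Fin (m+1))))]
    have := Equiv.prod_comp (Equiv.addLeft i) x
    simp only [Equiv.coe_addLeft] at this
    rw [← this]
    apply Finset.prod_congr rfl
    intro j _
    congr 1
    simp [Fin.cast_val_eq_self]
  rw [hdiag]
  ext i j
  by_cases h : i = j <;> simp [Matrix.diagonal_apply, Matrix.one_apply, h]

/-- Let `p ∈ ℝ[t]`, `x ∈ ℝⁿ` with `x > 0` entrywise, and `n ≥ 2`.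
For every `r ∈ {0,…,n-1}`,
`p_{(r,n)}(K_x) = [ p_{(r,n)}(α_x^{1/n}) / α_x^{r/n} ] • K_x^r`,
where `α_x = Π_k x_k` and `α_x^{1/n}` is the positive real `n`-th root. -/
theorem aeval_Kmat_polyPart (n : ℕ) (hn : 2 ≤ n) (p : Polynomial ℝ)
    (x : Fin n → ℝ) (hx : ∀ i, 0 < x i) (r : ℕ) (hr : r < n) :
    Polynomial.aeval (Kmat x) (polyPart p n r) =
      ((polyPart p n r).eval ((∏ k, x k) ^ ((1 : ℝ) / (n : ℝ))) /
          (∏ k, x k) ^ ((r : ℝ) / (n : ℝ))) • Kmat x ^ r := by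
  set α : ℝ := ∏ k, x k with hα
  have hαpos : 0 < α := Finset.prod_pos (fun i _ => hx i)
  have hn0 : (n : ℝ) ≠ 0 := by positivity
  set M := Kmat x
  have hMn : M ^ n = α • (1 : Matrix (Fin n) (Fin n) ℝ) := Kmat_pow_n hn x
  unfold polyPart
  rw [map_sum, Polynomial.eval_finset_sum, Finset.sum_div, Finset.sum_smul]
  apply Finset.sum_congr rfl
  intro k _
  by_cases h : k % n = r
  · simp only [h, if_pos rfl]
    have hk : n * (k / n) + r = k := by rw [← h]; exact Nat.div_add_mod k n
    set q := k / n with hq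
    have hMk : M ^ k = α ^ q • M ^ r := by
      rw [← hk, pow_add, pow_mul, hMn, smul_pow, one_pow, smul_mul_assoc, one_mul]
    have hc : (α ^ ((1:ℝ)/(n:ℝ))) ^ k / α ^ ((r:ℝ)/(n:ℝ)) = α ^ q := by
      rw [← Real.rpow_natCast (α ^ ((1:ℝ)/(n:ℝ))) k, ← Real.rpow_mul hαpos.le,
        ← Real.rpow_sub hαpos, ← Real.rpow_natCast α q]
      congr 1
      have : (k : ℝ) = n * q + r := by exact_mod_cast hk.symm
      field_simp
      linarith
    simp only [if_true, _root_.map_mul, _root_.map_pow, Polynomial.aeval_C,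
      Polynomial.aeval_X, Polynomial.eval_mul, Polynomial.eval_C, Polynomial.eval_pow,
      Polynomial.eval_X]
    rw [mul_div_assoc, hc, hMk, ← Algebra.smul_def, smul_smul]
  · simp [h]
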